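/- Let 1 → N → G →^π Q → 1 be a group extension, M a G-module, e_M : 0 → M → E_M → ℤ → 0 an extension of N-modules with Q-invariant class, μ : IG → M the restriction of an N-lift ν : ℤG → E_M of id_ℤ, and d : Q → Hom_N(IG, M) the derivation d(q) = α_x μ α_x⁻¹ − μ. Then the set Hom_N(ℤG, M) ⋊_T Q = {(φ, q) ∈ Hom_N(ℤG, M) × Q : φ|_{IG} = d(q)} is a subgroup of the semidirect product Hom_N(ℤG, M) ⋊ Q, the projection to Q is surjective with kernel isomorphic to M^N, and 0 → M^N → Hom_N(ℤG, M) ⋊_T Q → Q → 1 is a group extension. -/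

import Mathlib

set_option maxHeartbeats 1000000

/-- The augmentation map `ε : ℤG → ℤ`. -/
noncomputable def aug (G : Type*) [Group G] : MonoidAlgebra ℤ G →ₐ[ℤ] ℤ :=
  MonoidAlgebra.lift ℤ ℤ G 1

/-- The augmentation ideal `IG = ker ε`. -/
noncomputable def augIdeal (G : Type*) [Group G] : Ideal (MonoidAlgebra ℤ G) :=
  RingHom.ker (aug G).toRingHom

/-- `Q`-invariance of the class `[e_M] ∈ Ext¹_N(ℤ, M)`: for every `x ∈ G` the twisted
extension `x • e_M` is equivalent to `e_M` (where `ρ` is the `N = ker π` action on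
`E`). -/
def TwistEquiv {M E G Q : Type*} [AddCommGroup M] [AddCommGroup E] [Group G] [Group Q]
    [DistribMulAction G M] (π : G →* Q) (ρ : G → E → E)
    (i : M →+ E) (p : E →+ ℤ) (x : G) : Prop :=
  ∃ β : E → E, Function.Bijective β ∧ (∀ y z : E, β (y + z) = β y + β z) ∧
    (∀ e : E, p (β e) = p e) ∧ (∀ m : M, β (i m) = i (x • m)) ∧
    ∀ n ∈ π.ker, ∀ e : E, β (ρ (x⁻¹ * n * x) e) = ρ n (β e)

/-- Membership in the semidirect fiber product `Hom_N(ℤG, M) ⋊_T Q`: the pair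
`(φ, q)` with `φ : ℤG → M` additive and `N`-equivariant (`N = ker π`) such that the
restriction of `φ` to the augmentation ideal `IG` equals
`d(q) = α_x ∘ μ ∘ α_{x⁻¹} - μ` for any (equivalently every) lift `x` of `q`. -/
def FiberMem {G Q M : Type*} [Group G] [Group Q] [AddCommGroup M]
    [DistribMulAction G M] (π : G →* Q) (μ : augIdeal G → M)
    (φ : MonoidAlgebra ℤ G → M) (q : Q) : Prop :=
  (∀ a b : MonoidAlgebra ℤ G, φ (a + b) = φ a + φ b) ∧
  (∀ n ∈ π.ker, ∀ a : MonoidAlgebra ℤ G, φ (MonoidAlgebra.of ℤ G n * a) = n • φ a) ∧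
  ∀ x : G, π x = q → ∀ a : augIdeal G,
    φ ↑a = x • μ ⟨MonoidAlgebra.of ℤ G x⁻¹ * ↑a, (augIdeal G).mul_mem_left _ a.2⟩ - μ a

/-- The set `Hom_N(ℤG, M) ⋊_T Q = {(φ, q) : φ|_{IG} = d(q)}` is a subgroup of the
semidirect product `Hom_N(ℤG, M) ⋊ Q` (closed under the multiplication
`(φ, q)(φ', q') = (φ + q • φ', qq')`, containing the identity `(0, 1)` and closed
under inverses), the projection to `Q` is surjective (using the `Q`-invariance of
`[e_M]`), and its kernel is isomorphic to `Mᴺ` (it consists of the `(a ↦ ε a • m, 1)`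
with `m ∈ Mᴺ`), so `0 → Mᴺ → Hom_N(ℤG, M) ⋊_T Q → Q → 1` is a group extension. -/
theorem fiber_product_extension {G Q M E : Type*} [Group G] [Group Q] [AddCommGroup M]
    [DistribMulAction G M] [AddCommGroup E]
    (π : G →* Q) (hπ : Function.Surjective π)
    (i : M →+ E) (p : E →+ ℤ)
    (hi : Function.Injective i) (hp : Function.Surjective p)
    (hex : ∀ e : E, p e = 0 ↔ ∃ m : M, i m = e)
    (ρ : G → E → E)
    (hρ_add : ∀ n ∈ π.ker, ∀ e e' : E, ρ n (e + e') = ρ n e + ρ n e')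
    (hρ_mul : ∀ n ∈ π.ker, ∀ n' ∈ π.ker, ∀ e : E, ρ (n * n') e = ρ n (ρ n' e))
    (hρ_one : ∀ e : E, ρ 1 e = e)
    (hρ_i : ∀ n ∈ π.ker, ∀ m : M, ρ n (i m) = i (n • m))
    (hρ_p : ∀ n ∈ π.ker, ∀ e : E, p (ρ n e) = p e)
    (ν : MonoidAlgebra ℤ G →+ E)
    (hν_equiv : ∀ n ∈ π.ker, ∀ a : MonoidAlgebra ℤ G,
      ν (MonoidAlgebra.of ℤ G n * a) = ρ n (ν a))
    (hν_lift : ∀ a : MonoidAlgebra ℤ G, p (ν a) = aug G a)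
    (μ : augIdeal G → M)
    (hμ : ∀ a : augIdeal G, i (μ a) = ν ↑a)
    (hinv : ∀ x : G, TwistEquiv π ρ i p x) :
    -- closure under the semidirect multiplication
    (∀ (φ φ' : MonoidAlgebra ℤ G → M) (q q' : Q) (x : G),
      FiberMem π μ φ q → FiberMem π μ φ' q' → π x = q →
      FiberMem π μ (fun a => φ a + x • φ' (MonoidAlgebra.of ℤ G x⁻¹ * a)) (q * q'))
    -- the identity (0, 1) belongs to it
    ∧ FiberMem π μ (fun _ => (0 : M)) (1 : Q)
    -- closure under inverses
    ∧ (∀ (φ : MonoidAlgebra ℤ G → M) (q : Q) (x : G),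
        FiberMem π μ φ q → π x = q →
        FiberMem π μ (fun a => -(x⁻¹ • φ (MonoidAlgebra.of ℤ G x * a))) q⁻¹)
    -- the projection to Q is surjective
    ∧ (∀ q : Q, ∃ φ : MonoidAlgebra ℤ G → M, FiberMem π μ φ q)
    -- the kernel of the projection is Mᴺ
    ∧ (∀ φ : MonoidAlgebra ℤ G → M, FiberMem π μ φ (1 : Q) →
        (∀ n ∈ π.ker, n • φ 1 = φ 1) ∧ ∀ a : MonoidAlgebra ℤ G, φ a = aug G a • φ 1)
    ∧ (∀ m : M, (∀ n ∈ π.ker, n • m = m) →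
        FiberMem π μ (fun a => aug G a • m) (1 : Q)) := by
  classical
  have haug_of : ∀ x : G, aug G (MonoidAlgebra.of ℤ G x) = 1 := fun x => by simp [aug]
  have hmemI : ∀ a : MonoidAlgebra ℤ G, a ∈ augIdeal G ↔ aug G a = 0 := fun a => by
    rw [augIdeal, RingHom.mem_ker]; rfl
  -- Lemma A : for n ∈ ker π, n • μ (n⁻¹ • b) = μ b
  have lemA : ∀ n ∈ π.ker, ∀ b : augIdeal G,
      n • μ ⟨MonoidAlgebra.of ℤ G n⁻¹ * (b : MonoidAlgebra ℤ G), (augIdeal G).mul_mem_left _ b.2⟩ = μ b := by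
    intro n hn b
    apply hi
    rw [← hρ_i n hn, hμ, ← hν_equiv n hn, ← mul_assoc, ← map_mul, mul_inv_cancel, map_one,
      one_mul, hμ]
  -- Lemma B : x • μ (x⁻¹ • a) depends only on π x
  have lemB : ∀ x y : G, π x = π y → ∀ a : augIdeal G,
      x • μ ⟨MonoidAlgebra.of ℤ G x⁻¹ * (a : MonoidAlgebra ℤ G), (augIdeal G).mul_mem_left _ a.2⟩ =
      y • μ ⟨MonoidAlgebra.of ℤ G y⁻¹ * (a : MonoidAlgebra ℤ G), (augIdeal G).mul_mem_left _ a.2⟩ := by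
    intro x y hxy a
    have hn : x⁻¹ * y ∈ π.ker := by
      rw [MonoidHom.mem_ker, map_mul, map_inv, hxy, inv_mul_cancel]
    have h := lemA _ hn ⟨MonoidAlgebra.of ℤ G x⁻¹ * (a : MonoidAlgebra ℤ G), (augIdeal G).mul_mem_left _ a.2⟩
    rw [← h, smul_smul]
    congr 1
    · group
    · apply congrArg μ
      apply Subtype.ext
      show MonoidAlgebra.of ℤ G (x⁻¹ * y)⁻¹ * (MonoidAlgebra.of ℤ G x⁻¹ * (a : MonoidAlgebra ℤ G)) = _
      rw [← mul_assoc, ← map_mul]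
      congr 2
      group
  refine ⟨?_, ?_, ?_, ?_, ?_, ?_⟩
  -- 1. closure under multiplication
  · rintro φ φ' q q' x ⟨hadd, hequiv, hres⟩ ⟨hadd', hequiv', hres'⟩ hx
    refine ⟨?_, ?_, ?_⟩
    · intro a b
      simp only [mul_add, hadd, hadd', smul_add]
      abel
    · intro n hn a
      have hn' : x⁻¹ * n * x ∈ π.ker := by
        rw [MonoidHom.mem_ker] at hn ⊢
        rw [map_mul, map_mul, map_inv, hn, mul_one, inv_mul_cancel]
      have harg : MonoidAlgebra.of ℤ G x⁻¹ * (MonoidAlgebra.of ℤ G n * a)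
          = MonoidAlgebra.of ℤ G (x⁻¹ * n * x) * (MonoidAlgebra.of ℤ G x⁻¹ * a) := by
        rw [← mul_assoc, ← map_mul, ← mul_assoc, ← map_mul]
        congr 2
        group
      have hsw : ∀ v : M, x • ((x⁻¹ * n * x) • v) = n • (x • v) := by
        intro v
        rw [smul_smul, smul_smul]
        congr 1
        group
      simp only [hequiv n hn, harg, hequiv' _ hn', hsw, smul_add]
    · intro y hy a
      have hx' : π (x⁻¹ * y) = q' := by
        rw [map_mul, map_inv, hx, hy, inv_mul_cancel_left]
      have ha' : (MonoidAlgebra.of ℤ G x⁻¹ * (a : MonoidAlgebra ℤ G)) ∈ augIdeal G :=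
        (augIdeal G).mul_mem_left _ a.2
      have h1 := hres x hx a
      have h2 := hres' (x⁻¹ * y) hx' ⟨_, ha'⟩
      have hμeq : μ ⟨MonoidAlgebra.of ℤ G (x⁻¹ * y)⁻¹ * (MonoidAlgebra.of ℤ G x⁻¹ * (a : MonoidAlgebra ℤ G)),
          (augIdeal G).mul_mem_left _ ha'⟩
          = μ ⟨MonoidAlgebra.of ℤ G y⁻¹ * (a : MonoidAlgebra ℤ G), (augIdeal G).mul_mem_left _ a.2⟩ := by
        apply congrArg μ
        apply Subtype.ext
        show MonoidAlgebra.of ℤ G (x⁻¹ * y)⁻¹ * (MonoidAlgebra.of ℤ G x⁻¹ * (a : MonoidAlgebra ℤ G)) = _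
        rw [← mul_assoc, ← map_mul]
        congr 2
        group
      have hxy : x * (x⁻¹ * y) = y := by group
      show φ (a : MonoidAlgebra ℤ G) + x • φ' (MonoidAlgebra.of ℤ G x⁻¹ * (a : MonoidAlgebra ℤ G)) = _
      rw [h1, h2, hμeq, smul_sub, smul_smul, hxy]
      abel
  -- 2. identity
  · refine ⟨fun a b => by simp, fun n hn a => by simp, ?_⟩
    intro x hx a
    have hxk : x ∈ π.ker := MonoidHom.mem_ker.mpr hx
    show (0 : M) = _
    rw [lemA x hxk a, sub_self]
  -- 3. inverses
  · rintro φ q x ⟨hadd, hequiv, hres⟩ hx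
    refine ⟨?_, ?_, ?_⟩
    · intro a b
      simp only [mul_add, hadd, smul_add, neg_add]
    · intro n hn a
      have hn' : x * n * x⁻¹ ∈ π.ker := by
        rw [MonoidHom.mem_ker] at hn ⊢
        rw [map_mul, map_mul, map_inv, hn, mul_one, mul_inv_cancel]
      have harg : MonoidAlgebra.of ℤ G x * (MonoidAlgebra.of ℤ G n * a)
          = MonoidAlgebra.of ℤ G (x * n * x⁻¹) * (MonoidAlgebra.of ℤ G x * a) := by
        rw [← mul_assoc, ← map_mul, ← mul_assoc, ← map_mul]
        congr 2
        group
      have hsw : ∀ v : M, x⁻¹ • ((x * n * x⁻¹) • v) = n • (x⁻¹ • v) := by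
        intro v
        rw [smul_smul, smul_smul]
        congr 1
        group
      show -(x⁻¹ • φ (MonoidAlgebra.of ℤ G x * (MonoidAlgebra.of ℤ G n * a))) = _
      rw [harg, hequiv _ hn', hsw, smul_neg]
    · intro y hy a
      have hxa : (MonoidAlgebra.of ℤ G x * (a : MonoidAlgebra ℤ G)) ∈ augIdeal G :=
        (augIdeal G).mul_mem_left _ a.2
      have h1 := hres x hx ⟨_, hxa⟩
      have hμa : μ ⟨MonoidAlgebra.of ℤ G x⁻¹ * (MonoidAlgebra.of ℤ G x * (a : MonoidAlgebra ℤ G)),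
          (augIdeal G).mul_mem_left _ hxa⟩ = μ a := by
        apply congrArg μ
        apply Subtype.ext
        show MonoidAlgebra.of ℤ G x⁻¹ * (MonoidAlgebra.of ℤ G x * (a : MonoidAlgebra ℤ G)) = (a : MonoidAlgebra ℤ G)
        rw [← mul_assoc, ← map_mul, inv_mul_cancel, map_one, one_mul]
      have hB := lemB x⁻¹ y (by rw [map_inv, hx, hy]) a
      have hμb : μ ⟨MonoidAlgebra.of ℤ G x⁻¹⁻¹ * (a : MonoidAlgebra ℤ G), (augIdeal G).mul_mem_left _ a.2⟩
          = μ ⟨MonoidAlgebra.of ℤ G x * (a : MonoidAlgebra ℤ G), hxa⟩ := by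
        apply congrArg μ
        apply Subtype.ext
        show MonoidAlgebra.of ℤ G x⁻¹⁻¹ * (a : MonoidAlgebra ℤ G) = MonoidAlgebra.of ℤ G x * (a : MonoidAlgebra ℤ G)
        rw [inv_inv]
      rw [hμb] at hB
      show -(x⁻¹ • φ (MonoidAlgebra.of ℤ G x * (a : MonoidAlgebra ℤ G))) = _
      rw [h1, hμa, ← hB, smul_sub, smul_smul, inv_mul_cancel, one_smul]
      abel
  -- 4. surjectivity
  · intro q
    obtain ⟨x, hx⟩ := hπ q
    obtain ⟨β, hβbij, hβadd, hβp, hβi, hβρ⟩ := hinv x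
    have key : ∀ a : MonoidAlgebra ℤ G,
        p (β (ν (MonoidAlgebra.of ℤ G x⁻¹ * a)) - ν a) = 0 := by
      intro a
      rw [map_sub, hβp, hν_lift, hν_lift, map_mul, haug_of, one_mul, sub_self]
    set φ : MonoidAlgebra ℤ G → M := fun a => Classical.choose ((hex _).mp (key a)) with hφ
    have hφdef : ∀ a, i (φ a) = β (ν (MonoidAlgebra.of ℤ G x⁻¹ * a)) - ν a := fun a =>
      Classical.choose_spec ((hex _).mp (key a))
    have hβsub : ∀ e e' : E, β (e - e') = β e - β e' :=
      fun e e' => (AddMonoidHom.mk' β hβadd).map_sub e e'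
    refine ⟨φ, ?_, ?_, ?_⟩
    · intro a b
      apply hi
      rw [map_add, hφdef, hφdef, hφdef, mul_add, map_add, hβadd, map_add]
      abel
    · intro n hn a
      apply hi
      have hn' : x⁻¹ * n * x ∈ π.ker := by
        rw [MonoidHom.mem_ker] at hn ⊢
        rw [map_mul, map_mul, map_inv, hn, mul_one, inv_mul_cancel]
      have harg : MonoidAlgebra.of ℤ G x⁻¹ * (MonoidAlgebra.of ℤ G n * a)
          = MonoidAlgebra.of ℤ G (x⁻¹ * n * x) * (MonoidAlgebra.of ℤ G x⁻¹ * a) := by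
        rw [← mul_assoc, ← map_mul, ← mul_assoc, ← map_mul]
        congr 2
        group
      have hρsub : ∀ e e' : E, ρ n (e - e') = ρ n e - ρ n e' :=
        fun e e' => (AddMonoidHom.mk' (ρ n) (hρ_add n hn)).map_sub e e'
      rw [← hρ_i n hn, hφdef, hφdef, harg, hν_equiv _ hn', hβρ n hn, hν_equiv n hn, hρsub]
    · intro y hy a
      rw [lemB y x (by rw [hy, hx]) a]
      apply hi
      rw [hφdef, map_sub, ← hβi, hμ, hμ]
  -- 5. kernel : forward direction
  · rintro φ ⟨hadd, hequiv, hres⟩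
    set F : MonoidAlgebra ℤ G →+ M := AddMonoidHom.mk' φ hadd with hF
    have hIG : ∀ a : augIdeal G, φ (a : MonoidAlgebra ℤ G) = 0 := by
      intro a
      have heq : (⟨MonoidAlgebra.of ℤ G (1 : G)⁻¹ * (a : MonoidAlgebra ℤ G),
          (augIdeal G).mul_mem_left _ a.2⟩ : augIdeal G) = a := by
        apply Subtype.ext
        show MonoidAlgebra.of ℤ G (1 : G)⁻¹ * (a : MonoidAlgebra ℤ G) = (a : MonoidAlgebra ℤ G)
        rw [inv_one, map_one, one_mul]
      rw [hres 1 (map_one π) a, heq, one_smul, sub_self]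
    have hφ1 : ∀ n ∈ π.ker, φ (MonoidAlgebra.of ℤ G n) = φ 1 := by
      intro n hn
      have hmem : MonoidAlgebra.of ℤ G n - 1 ∈ augIdeal G := by
        rw [hmemI, map_sub, haug_of, map_one, sub_self]
      have h0 : φ (MonoidAlgebra.of ℤ G n - 1) = 0 := hIG ⟨_, hmem⟩
      have : φ (MonoidAlgebra.of ℤ G n - 1 + 1) = φ (MonoidAlgebra.of ℤ G n - 1) + φ 1 :=
        hadd _ _
      rw [sub_add_cancel, h0, zero_add] at this
      exact this
    constructor
    · intro n hn
      have := hequiv n hn 1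
      rw [mul_one, hφ1 n hn] at this
      exact this.symm
    · intro a
      have hmem : a - aug G a • 1 ∈ augIdeal G := by
        rw [hmemI, map_sub, map_smul, map_one, smul_eq_mul, mul_one, sub_self]
      have h0 : φ (a - aug G a • 1) = 0 := hIG ⟨_, hmem⟩
      have hsmul : φ (aug G a • (1 : MonoidAlgebra ℤ G)) = aug G a • φ 1 :=
        F.toIntLinearMap.map_smul (aug G a) 1
      have : φ (a - aug G a • 1 + aug G a • 1)
          = φ (a - aug G a • 1) + φ (aug G a • 1) := hadd _ _
      rw [sub_add_cancel, h0, zero_add, hsmul] at this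
      exact this
  -- 6. kernel : backward direction
  · intro m hm
    refine ⟨?_, ?_, ?_⟩
    · intro a b
      show aug G (a + b) • m = aug G a • m + aug G b • m
      rw [map_add, add_smul]
    · intro n hn a
      show aug G (MonoidAlgebra.of ℤ G n * a) • m = _
      rw [map_mul, haug_of, one_mul, smul_comm, hm n hn]
    · intro x hx a
      have hxk : x ∈ π.ker := MonoidHom.mem_ker.mpr hx
      show aug G (a : MonoidAlgebra ℤ G) • m = _
      rw [lemA x hxk a, sub_self, (hmemI (a : MonoidAlgebra ℤ G)).mp a.2, zero_smul]
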